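/- For all m ≥ 2, the Schur multiplier of the Heisenberg Lie algebra H(m) of dimension 2m+1 has dimension 2m² − m − 1. -/

import Mathlib

open Module

instance Prod.instLieRingBracket (L M : Type*) [LieRing L] [LieRing M] :
    Bracket (L × M) (L × M) :=
  ⟨fun x y => (⁅x.1, y.1⁆, ⁅x.2, y.2⁆)⟩

/-- Direct sum (product) of two Lie rings. -/
instance Prod.instLieRing (L M : Type*) [LieRing L] [LieRing M] : LieRing (L × M) where
  add_lie x y z := by ext <;> simp [Bracket.bracket, add_lie]
  lie_add x y z := by ext <;> simp [Bracket.bracket, lie_add]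
  lie_self x := by ext <;> simp [Bracket.bracket]
  leibniz_lie x y z := by ext <;> simp [Bracket.bracket]

instance Prod.instLieAlgebra (k L M : Type*) [CommRing k] [LieRing L] [LieRing M]
    [LieAlgebra k L] [LieAlgebra k M] : LieAlgebra k (L × M) where
  lie_smul t x y := by ext <;> simp [Bracket.bracket, lie_smul]

section Schur
variable (k : Type*) [Field k] (L : Type*) [LieRing L] [LieAlgebra k L]

/-- The canonical free presentation map `FreeLieAlgebra k L → L`. -/
noncomputable def presPi : FreeLieAlgebra k L →ₗ⁅k⁆ L := FreeLieAlgebra.lift k id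

/-- `R ∩ F²` for the canonical free presentation `0 → R → F → L → 0`. -/
noncomputable def multNum : LieIdeal k (FreeLieAlgebra k L) :=
  (presPi k L).ker ⊓ ⁅(⊤ : LieIdeal k (FreeLieAlgebra k L)), (⊤ : LieIdeal k (FreeLieAlgebra k L))⁆

/-- `[R, F]` for the canonical free presentation. -/
noncomputable def multDen : LieIdeal k (FreeLieAlgebra k L) :=
  ⁅(presPi k L).ker, (⊤ : LieIdeal k (FreeLieAlgebra k L))⁆

/-- The Schur multiplier `M(L) = (R ∩ F²)/[R,F]`, as a Lie algebra (it is abelian). -/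
noncomputable def schurMultiplier :=
  (↥(multNum k L)) ⧸ (LieIdeal.comap ((multNum k L) : LieSubalgebra k (FreeLieAlgebra k L)).incl
    (multDen k L))

noncomputable instance : LieRing (schurMultiplier k L) := by unfold schurMultiplier; infer_instance
noncomputable instance : LieAlgebra k (schurMultiplier k L) := by
  unfold schurMultiplier; infer_instance
noncomputable instance : Module k (schurMultiplier k L) := by
  unfold schurMultiplier; infer_instance

/-- dim M(L). -/
noncomputable def schurMultDim : ℕ := Module.finrank k (schurMultiplier k L)

/-- The derived subalgebra `L² = [L,L]` as an ideal. -/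
noncomputable def derivedIdeal : LieIdeal k L := ⁅(⊤ : LieIdeal k L), (⊤ : LieIdeal k L)⁆

end Schur



section CocycleExt

/-- Data for a central extension of `L` by `V` via a 2-cocycle vanishing on brackets. -/
structure CocData (k : Type*) [CommRing k] (L V : Type*) [LieRing L] [LieAlgebra k L]
    [AddCommGroup V] [Module k V] where
  σ : L →ₗ[k] L →ₗ[k] V
  alt : ∀ x, σ x x = 0
  brkl : ∀ x y z : L, σ ⁅x, y⁆ z = 0
  brkr : ∀ x y z : L, σ x ⁅y, z⁆ = 0

variable {k : Type*} [CommRing k] {L V : Type*} [LieRing L] [LieAlgebra k L]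
  [AddCommGroup V] [Module k V]

def CExt (_c : CocData k L V) := L × V

variable (c : CocData k L V)

instance : AddCommGroup (CExt c) := inferInstanceAs (AddCommGroup (L × V))
instance : Module k (CExt c) := inferInstanceAs (Module k (L × V))

instance : Bracket (CExt c) (CExt c) := ⟨fun x y => (⁅x.1, y.1⁆, c.σ x.1 y.1)⟩

lemma CExt.bracket_def (x y : CExt c) : ⁅x, y⁆ = ((⁅x.1, y.1⁆, c.σ x.1 y.1) : L × V) := rfl

lemma CExt.ext_iff' (x y : CExt c) : x = y ↔ x.1 = y.1 ∧ x.2 = y.2 := Prod.ext_iff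

instance : LieRing (CExt c) where
  add_lie x y z := by
    rw [CExt.ext_iff']; constructor
    · show ⁅x.1 + y.1, z.1⁆ = ⁅x.1, z.1⁆ + ⁅y.1, z.1⁆; rw [add_lie]
    · show c.σ (x.1 + y.1) z.1 = c.σ x.1 z.1 + c.σ y.1 z.1; simp
  lie_add x y z := by
    rw [CExt.ext_iff']; constructor
    · show ⁅x.1, y.1 + z.1⁆ = ⁅x.1, y.1⁆ + ⁅x.1, z.1⁆; rw [lie_add]
    · show c.σ x.1 (y.1 + z.1) = c.σ x.1 y.1 + c.σ x.1 z.1; simp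
  lie_self x := by
    rw [CExt.ext_iff']; exact ⟨lie_self _, c.alt _⟩
  leibniz_lie x y z := by
    rw [CExt.ext_iff']; constructor
    · show ⁅x.1, ⁅y.1, z.1⁆⁆ = ⁅⁅x.1, y.1⁆, z.1⁆ + ⁅y.1, ⁅x.1, z.1⁆⁆; exact leibniz_lie _ _ _
    · show c.σ x.1 ⁅y.1, z.1⁆ = c.σ ⁅x.1, y.1⁆ z.1 + c.σ y.1 ⁅x.1, z.1⁆
      rw [c.brkl, c.brkr, c.brkr, add_zero]

instance : LieAlgebra k (CExt c) where
  lie_smul t x y := by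
    rw [CExt.ext_iff']; constructor
    · show ⁅x.1, t • y.1⁆ = t • ⁅x.1, y.1⁆; rw [lie_smul]
    · show c.σ x.1 (t • y.1) = t • c.σ x.1 y.1; simp

/-- First projection as a Lie algebra morphism. -/
def CExt.fst : CExt c →ₗ⁅k⁆ L where
  toFun x := x.1
  map_add' _ _ := rfl
  map_smul' _ _ := rfl
  map_lie' := rfl

/-- Second projection as a linear map. -/
def CExt.snd : CExt c →ₗ[k] V where
  toFun x := x.2
  map_add' _ _ := rfl
  map_smul' _ _ := rfl

/-- Constructor for elements of `CExt c`. -/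
def CExt.mkE (x : L) (v : V) : CExt c := ((x, v) : L × V)

lemma CExt.mkE_fst (x : L) (v : V) : (CExt.mkE c x v).1 = x := rfl

lemma CExt.mkE_snd (x : L) (v : V) : (CExt.mkE c x v).2 = v := rfl

lemma CExt.snd_bracket (a b : CExt c) : (⁅a, b⁆).2 = c.σ a.1 b.1 := rfl

lemma CExt.central (a b : CExt c) (ha : a.1 = 0) : ⁅a, b⁆ = 0 := by
  rw [CExt.ext_iff']
  constructor
  · show ⁅a.1, b.1⁆ = 0; rw [ha, zero_lie]
  · show c.σ a.1 b.1 = 0; rw [ha]; simp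

end CocycleExt
section Main

open FreeLieAlgebra

variable (k : Type*) [Field k] (H : Type*) [LieRing H] [LieAlgebra k H]

namespace SH

noncomputable def piF : FreeLieAlgebra k H →ₗ⁅k⁆ H := presPi k H

noncomputable def Dsub : Submodule k (FreeLieAlgebra k H) := (multDen k H).toSubmodule

noncomputable abbrev T := (FreeLieAlgebra k H) ⧸ (Dsub k H)

noncomputable def mkT : FreeLieAlgebra k H →ₗ[k] T k H := (Dsub k H).mkQ

variable {k H}

lemma piF_of (x : H) : piF k H (of k x) = x := FreeLieAlgebra.lift_of_apply _ _

lemma mkT_lie_zero_left {w : FreeLieAlgebra k H} (hw : piF k H w = 0)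
    (g : FreeLieAlgebra k H) : mkT k H ⁅w, g⁆ = 0 := by
  have : ⁅w, g⁆ ∈ multDen k H :=
    LieSubmodule.lie_mem_lie (LieHom.mem_ker.2 hw) (LieSubmodule.mem_top g)
  exact (Submodule.Quotient.mk_eq_zero _).2 this

lemma mkT_lie_zero_right (w : FreeLieAlgebra k H) {g : FreeLieAlgebra k H}
    (hg : piF k H g = 0) : mkT k H ⁅w, g⁆ = 0 := by
  rw [← lie_skew, map_neg, mkT_lie_zero_left hg, neg_zero]

lemma mkT_lie_congr_left {a b : FreeLieAlgebra k H} (h : piF k H a = piF k H b)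
    (g : FreeLieAlgebra k H) : mkT k H ⁅a, g⁆ = mkT k H ⁅b, g⁆ := by
  have h2 : mkT k H ⁅a - b, g⁆ = 0 :=
    mkT_lie_zero_left (by rw [map_sub, h, sub_self]) g
  rw [sub_lie, map_sub, sub_eq_zero] at h2
  exact h2

lemma mkT_lie_congr_right (a : FreeLieAlgebra k H) {b g : FreeLieAlgebra k H}
    (h : piF k H b = piF k H g) : mkT k H ⁅a, b⁆ = mkT k H ⁅a, g⁆ := by
  have h2 : mkT k H ⁅a, b - g⁆ = 0 :=
    mkT_lie_zero_right a (by rw [map_sub, h, sub_self])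
  rw [lie_sub, map_sub, sub_eq_zero] at h2
  exact h2

variable (k H)

/-- The bilinear map `H × H → F/[R,F]`, `(x, y) ↦ [of x, of y]`. -/
noncomputable def beta : H →ₗ[k] H →ₗ[k] T k H :=
  LinearMap.mk₂ k (fun x y => mkT k H ⁅of k x, of k y⁆)
    (fun x x' y => by
      rw [mkT_lie_congr_left (a := of k (x + x')) (b := of k x + of k x')
        (by simp [piF_of, map_add]) (of k y), add_lie, map_add])
    (fun c x y => by
      rw [mkT_lie_congr_left (a := of k (c • x)) (b := c • of k x)
        (by simp [piF_of, map_smul]) (of k y), smul_lie, map_smul])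
    (fun x y y' => by
      rw [mkT_lie_congr_right (of k x) (b := of k (y + y')) (g := of k y + of k y')
        (by simp [piF_of, map_add]), lie_add, map_add])
    (fun c x y => by
      rw [mkT_lie_congr_right (of k x) (b := of k (c • y)) (g := c • of k y)
        (by simp [piF_of, map_smul]), lie_smul c (of k x) (of k y), map_smul])

variable {k H}

lemma beta_apply (x y : H) : beta k H x y = mkT k H ⁅of k x, of k y⁆ := rfl

lemma beta_self (x : H) : beta k H x x = 0 := by
  rw [beta_apply, lie_self, map_zero]

lemma beta_skew (x y : H) : beta k H x y = -beta k H y x := by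
  have h := beta_self (k := k) (H := H) (x + y)
  simp only [map_add, LinearMap.add_apply, beta_self] at h
  rw [eq_neg_iff_add_eq_zero]
  rw [add_zero, zero_add] at h
  rw [add_comm]
  exact h

lemma beta_lie_left (x y z : H) :
    beta k H ⁅x, y⁆ z = mkT k H ⁅⁅of k x, of k y⁆, of k z⁆ := by
  rw [beta_apply]
  exact mkT_lie_congr_left (by simp [piF_of, LieHom.map_lie]) (of k z)

lemma beta_cocycle (x y z : H) :
    beta k H ⁅x, y⁆ z + beta k H ⁅y, z⁆ x + beta k H ⁅z, x⁆ y = 0 := by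
  rw [beta_lie_left, beta_lie_left, beta_lie_left, ← map_add, ← map_add]
  have h1 := lie_jacobi (of k x) (of k y) (of k z)
  have h2 : ⁅⁅of k x, of k y⁆, of k z⁆ + ⁅⁅of k y, of k z⁆, of k x⁆
      + ⁅⁅of k z, of k x⁆, of k y⁆ = 0 := by
    rw [← lie_skew ⁅of k x, of k y⁆ (of k z), ← lie_skew ⁅of k y, of k z⁆ (of k x),
      ← lie_skew ⁅of k z, of k x⁆ (of k y), ← neg_add, ← neg_add, neg_eq_zero, add_rotate]
    exact h1
  rw [h2, map_zero]

end SH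

end Main
section Main2

open FreeLieAlgebra Submodule

namespace SH

variable (k : Type*) [Field k] (H : Type*) [LieRing H] [LieAlgebra k H]

noncomputable def Zsub : Submodule k H := (derivedIdeal k H).toSubmodule

variable {k H}

lemma lie_mem_Zsub (x y : H) : ⁅x, y⁆ ∈ Zsub k H :=
  LieSubmodule.lie_mem_lie (LieSubmodule.mem_top x) (LieSubmodule.mem_top y)

variable (k H) in
/-- The bracket as a bilinear map into the derived ideal. -/
noncomputable def Bil : H →ₗ[k] H →ₗ[k] ↥(Zsub k H) :=
  LinearMap.mk₂ k (fun x y => ⟨⁅x, y⁆, lie_mem_Zsub x y⟩)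
    (fun x x' y => Subtype.ext (add_lie x x' y))
    (fun c x y => Subtype.ext (smul_lie c x y))
    (fun x y y' => Subtype.ext (lie_add x y y'))
    (fun c x y => Subtype.ext (lie_smul c x y))

section WithDim

variable [FiniteDimensional k H]

variable (k H) in
/-- A basis vector of the (1-dimensional) derived ideal. -/
noncomputable def vH (h1 : finrank k ↥(Zsub k H) = 1) : H :=
  ((Module.finBasisOfFinrankEq k ↥(Zsub k H) h1) 0 : ↥(Zsub k H))

variable {h1 : finrank k ↥(Zsub k H) = 1}

lemma vH_mem (h1 : finrank k ↥(Zsub k H) = 1) : vH k H h1 ∈ Zsub k H :=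
  ((Module.finBasisOfFinrankEq k ↥(Zsub k H) h1) 0).2

lemma vH_ne_zero (h1 : finrank k ↥(Zsub k H) = 1) : vH k H h1 ≠ 0 := by
  have hb := (Module.finBasisOfFinrankEq k ↥(Zsub k H) h1).ne_zero 0
  intro hz
  have hz' : ((Module.finBasisOfFinrankEq k ↥(Zsub k H) h1) 0 : H) = 0 := hz
  exact hb (Subtype.ext hz')

lemma Zsub_eq_span (h1 : finrank k ↥(Zsub k H) = 1) :
    ∀ u ∈ Zsub k H, ∃ c : k, u = c • vH k H h1 := by
  intro u hu
  set b := Module.finBasisOfFinrankEq k ↥(Zsub k H) h1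
  refine ⟨b.repr ⟨u, hu⟩ 0, ?_⟩
  have := b.sum_repr ⟨u, hu⟩
  rw [Fin.sum_univ_one] at this
  have := congrArg (Subtype.val) this
  simpa [vH] using this.symm

variable (k H) in
/-- The alternating form recording the bracket: `⁅x,y⁆ = ω x y • v`. -/
noncomputable def om (h1 : finrank k ↥(Zsub k H) = 1) : H →ₗ[k] H →ₗ[k] k :=
  (Bil k H).compr₂ ((Module.finBasisOfFinrankEq k ↥(Zsub k H) h1).coord 0)

lemma lie_eq_om_smul (h1 : finrank k ↥(Zsub k H) = 1) (x y : H) :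
    ⁅x, y⁆ = om k H h1 x y • vH k H h1 := by
  set b := Module.finBasisOfFinrankEq k ↥(Zsub k H) h1
  have := b.sum_repr (Bil k H x y)
  rw [Fin.sum_univ_one] at this
  have h2 := congrArg (Subtype.val) this
  exact h2.symm

lemma om_self (h1 : finrank k ↥(Zsub k H) = 1) (x : H) : om k H h1 x x = 0 := by
  have := lie_eq_om_smul h1 x x
  rw [lie_self] at this
  rcases smul_eq_zero.1 this.symm with h | h
  · exact h
  · exact absurd h (vH_ne_zero h1)

lemma om_skew (h1 : finrank k ↥(Zsub k H) = 1) (x y : H) :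
    om k H h1 y x = -om k H h1 x y := by
  have h := om_self h1 (x + y)
  simp only [map_add, LinearMap.add_apply, om_self h1] at h
  rw [zero_add, add_zero] at h
  exact eq_neg_of_add_eq_zero_left h

lemma mem_Zsub_iff (hHc : derivedIdeal k H = LieAlgebra.center k H) (x : H) :
    x ∈ Zsub k H ↔ ∀ y : H, ⁅x, y⁆ = 0 := by
  rw [Zsub, hHc]
  change x ∈ LieAlgebra.center k H ↔ _
  rw [LieModule.mem_maxTrivSubmodule]
  constructor
  · intro h y; rw [← lie_skew, h y, neg_zero]
  · intro h y; rw [← lie_skew, h y, neg_zero]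

lemma om_eq_zero_iff (hHc : derivedIdeal k H = LieAlgebra.center k H)
    (h1 : finrank k ↥(Zsub k H) = 1) (x : H) :
    om k H h1 x = 0 ↔ x ∈ Zsub k H := by
  rw [mem_Zsub_iff hHc]
  constructor
  · intro h y
    rw [lie_eq_om_smul h1, h, LinearMap.zero_apply, zero_smul]
  · intro h
    ext y
    have := lie_eq_om_smul h1 x y
    rw [h y] at this
    rcases smul_eq_zero.1 this.symm with h' | h'
    · simpa using h'
    · exact absurd h' (vH_ne_zero h1)

/-- Two functionals, one's kernel inside the other's: the second is a multiple. -/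
lemma funct_multiple {f g : H →ₗ[k] k} (hf : f ≠ 0) (h : LinearMap.ker f ≤ LinearMap.ker g) :
    ∃ c : k, g = c • f := by
  have : ∃ w0, f w0 ≠ 0 := by
    by_contra hc
    push_neg at hc
    exact hf (LinearMap.ext fun w => hc w)
  obtain ⟨w0, hw0⟩ := this
  refine ⟨g w0 / f w0, ?_⟩
  ext w
  have hker : w - (f w / f w0) • w0 ∈ LinearMap.ker f := by
    rw [LinearMap.mem_ker, map_sub, map_smul, smul_eq_mul, div_mul_cancel₀ _ hw0, sub_self]
  have := h hker
  rw [LinearMap.mem_ker, map_sub, map_smul, smul_eq_mul, sub_eq_zero] at this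
  rw [this]
  simp only [LinearMap.smul_apply, smul_eq_mul]
  field_simp

end WithDim

end SH

end Main2
section Main3

open FreeLieAlgebra Submodule

namespace SH

variable {k : Type*} [Field k] {H : Type*} [LieRing H] [LieAlgebra k H]
variable [FiniteDimensional k H]

lemma exists_om_ne_zero (h1 : finrank k ↥(Zsub k H) = 1) :
    ∃ x y : H, om k H h1 x y ≠ 0 := by
  by_contra hc
  push_neg at hc
  have hz : ∀ x y : H, ⁅x, y⁆ = 0 := fun x y => by
    rw [lie_eq_om_smul h1, hc, zero_smul]
  have hZ' : derivedIdeal k H ≤ ⊥ := by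
    rw [derivedIdeal, LieSubmodule.lie_le_iff]
    intro x _ m _
    rw [LieSubmodule.mem_bot]
    exact hz x m
  have hm := hZ' ((LieSubmodule.mem_toSubmodule _).1 (vH_mem h1))
  rw [LieSubmodule.mem_bot] at hm
  exact vH_ne_zero h1 hm

lemma om_gamma_rel (h1 : finrank k ↥(Zsub k H) = 1) (x y z : H) :
    om k H h1 x y • beta k H (vH k H h1) z + om k H h1 y z • beta k H (vH k H h1) x
      + om k H h1 z x • beta k H (vH k H h1) y = 0 := by
  have hc := beta_cocycle (k := k) (H := H) x y z
  rw [lie_eq_om_smul h1 x y, lie_eq_om_smul h1 y z, lie_eq_om_smul h1 z x] at hc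
  simpa only [map_smul, LinearMap.smul_apply] using hc

lemma gamma_zero (hHc : derivedIdeal k H = LieAlgebra.center k H)
    (h1 : finrank k ↥(Zsub k H) = 1) (hdim : 4 ≤ finrank k H) (z : H) :
    beta k H (vH k H h1) z = 0 := by
  by_cases hz : om k H h1 z = 0
  · obtain ⟨x, y, hxy⟩ := exists_om_ne_zero h1
    have hrel := om_gamma_rel h1 x y z
    have h2 : om k H h1 y z = 0 := by rw [om_skew h1 z y, hz]; simp
    have h3 : om k H h1 z x = 0 := by rw [hz]; simp
    rw [h2, h3, zero_smul, zero_smul, add_zero, add_zero] at hrel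
    rcases smul_eq_zero.1 hrel with h | h
    · exact absurd h hxy
    · exact h
  · set f := om k H h1 z with hf
    have hrange : finrank k ↥(LinearMap.range f) = 1 := by
      have hb : LinearMap.range f ≠ ⊥ := fun hb0 => hz (LinearMap.range_eq_bot.1 hb0)
      have hle : finrank k ↥(LinearMap.range f) ≤ 1 := by
        have := Submodule.finrank_le (LinearMap.range f)
        simpa using this
      have hne : finrank k ↥(LinearMap.range f) ≠ 0 :=
        fun h0 => hb (Submodule.finrank_eq_zero.1 h0)
      omega
    have hK : finrank k ↥(LinearMap.ker f) + 1 = finrank k H := by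
      have := LinearMap.finrank_range_add_finrank_ker f
      omega
    have hexists : ∃ x ∈ LinearMap.ker f, ∃ y ∈ LinearMap.ker f, om k H h1 x y ≠ 0 := by
      by_contra hc
      push_neg at hc
      have hsub : LinearMap.ker f ≤ (k ∙ z) ⊔ Zsub k H := by
        intro x hx
        by_cases hox : om k H h1 x = 0
        · exact Submodule.mem_sup_right ((om_eq_zero_iff hHc h1 x).1 hox)
        · have hker : LinearMap.ker f ≤ LinearMap.ker (om k H h1 x) := by
            intro y hy
            rw [LinearMap.mem_ker]
            exact hc x hx y hy
          obtain ⟨c, hcq⟩ := funct_multiple hz hker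
          have h0 : om k H h1 (x - c • z) = 0 := by
            rw [map_sub, map_smul, hcq, ← hf, sub_self]
          have hmem : x - c • z ∈ Zsub k H := (om_eq_zero_iff hHc h1 _).1 h0
          have hxe : x = c • z + (x - c • z) := by abel
          rw [hxe]
          exact Submodule.add_mem _
            (Submodule.mem_sup_left (Submodule.smul_mem _ _ (Submodule.mem_span_singleton_self z)))
            (Submodule.mem_sup_right hmem)
      have hZspan : Zsub k H ≤ k ∙ (vH k H h1) := by
        intro u hu
        obtain ⟨c, rfl⟩ := Zsub_eq_span h1 u hu
        exact Submodule.smul_mem _ _ (Submodule.mem_span_singleton_self _)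
      have hS : finrank k ↥((k ∙ z) ⊔ Zsub k H) ≤ 2 := by
        have heq := Submodule.finrank_sup_add_finrank_inf_eq (k ∙ z) (Zsub k H)
        have h1' : finrank k ↥(k ∙ z) ≤ 1 := by
          by_cases hz0 : z = 0
          · rw [hz0]
            rw [Submodule.span_zero_singleton]
            rw [finrank_bot]
            omega
          · rw [finrank_span_singleton hz0]
        have h2' : finrank k ↥(Zsub k H) = 1 := h1
        omega
      have hKle : finrank k ↥(LinearMap.ker f) ≤ 2 :=
        le_trans (Submodule.finrank_mono hsub) hS
      omega
    obtain ⟨x, hx, y, hy, hxy⟩ := hexists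
    have hrel := om_gamma_rel h1 x y z
    rw [LinearMap.mem_ker] at hx hy
    have hy' : om k H h1 z y = 0 := hy
    have h2 : om k H h1 y z = 0 := by rw [om_skew h1 z y, hy', neg_zero]
    have h3 : om k H h1 z x = 0 := hx
    rw [h2, h3, zero_smul, zero_smul, add_zero, add_zero] at hrel
    rcases smul_eq_zero.1 hrel with h | h
    · exact absurd h hxy
    · exact h

lemma beta_Zsub_left (hHc : derivedIdeal k H = LieAlgebra.center k H)
    (h1 : finrank k ↥(Zsub k H) = 1) (hdim : 4 ≤ finrank k H) :
    ∀ u ∈ Zsub k H, ∀ w : H, beta k H u w = 0 := by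
  intro u hu w
  obtain ⟨c, rfl⟩ := Zsub_eq_span h1 u hu
  rw [map_smul, LinearMap.smul_apply, gamma_zero hHc h1 hdim w, smul_zero]

lemma beta_Zsub_right (hHc : derivedIdeal k H = LieAlgebra.center k H)
    (h1 : finrank k ↥(Zsub k H) = 1) (hdim : 4 ≤ finrank k H) :
    ∀ w : H, ∀ u ∈ Zsub k H, beta k H w u = 0 := by
  intro w u hu
  rw [beta_skew, beta_Zsub_left hHc h1 hdim u hu w, neg_zero]

end SH

end Main3
section Main4

open FreeLieAlgebra Submodule

namespace SH

variable (k : Type*) [Field k] (H : Type*) [LieRing H] [LieAlgebra k H]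
variable [FiniteDimensional k H]

noncomputable abbrev Wq := H ⧸ Zsub k H

noncomputable def qW : H →ₗ[k] Wq k H := (Zsub k H).mkQ

noncomputable def nW : ℕ := finrank k (Wq k H)

noncomputable def bW : Basis (Fin (nW k H)) k (Wq k H) := Module.finBasis k (Wq k H)

/-- Lifts of the basis vectors of `H/Z` to `H`. -/
noncomputable def xi (i : Fin (nW k H)) : H :=
  Function.surjInv (Submodule.mkQ_surjective (Zsub k H)) (bW k H i)

lemma qW_xi (i : Fin (nW k H)) : qW k H (xi k H i) = bW k H i :=
  Function.surjInv_eq _ _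

/-- Index type for the "exterior square" model. -/
def Idx : Type _ := {p : Fin (nW k H) × Fin (nW k H) // p.1 < p.2}

noncomputable instance : Fintype (Idx k H) := by unfold Idx; infer_instance

noncomputable instance : DecidableEq (Idx k H) := by unfold Idx; infer_instance

/-- Model for `Λ²(H/Z)`. -/
abbrev Vm := Idx k H → k

/-- The map `V → T = F/[R,F]` sending basis vectors to `β(x_i, x_j)`. -/
noncomputable def lam : Vm k H →ₗ[k] T k H :=
  (Pi.basisFun k (Idx k H)).constr k (fun p => beta k H (xi k H p.1.1) (xi k H p.1.2))

lemma lam_basis (p : Idx k H) :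
    lam k H (Pi.basisFun k (Idx k H) p) = beta k H (xi k H p.1.1) (xi k H p.1.2) :=
  Basis.constr_basis _ _ _ _

variable {k H}

/-- Decomposition of an element of `H` along the lifted basis modulo the center. -/
lemma decomp (a : H) :
    a - (∑ i, (bW k H).repr (qW k H a) i • xi k H i) ∈ Zsub k H := by
  have : qW k H (a - ∑ i, (bW k H).repr (qW k H a) i • xi k H i) = 0 := by
    rw [map_sub, map_sum]
    simp only [map_smul, qW_xi]
    rw [Basis.sum_repr]
    exact sub_self _
  rwa [qW, Submodule.mkQ_apply, Submodule.Quotient.mk_eq_zero] at this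

lemma beta_mem_range (hHc : derivedIdeal k H = LieAlgebra.center k H)
    (h1 : finrank k ↥(Zsub k H) = 1) (hdim : 4 ≤ finrank k H) (a b : H) :
    beta k H a b ∈ LinearMap.range (lam k H) := by
  -- first reduce to basis vectors
  have hxi : ∀ i j, beta k H (xi k H i) (xi k H j) ∈ LinearMap.range (lam k H) := by
    intro i j
    rcases lt_trichotomy i j with h | h | h
    · exact ⟨Pi.basisFun k (Idx k H) ⟨(i, j), h⟩, lam_basis k H ⟨(i, j), h⟩⟩
    · rw [h, beta_self]; exact Submodule.zero_mem _
    · rw [beta_skew]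
      exact Submodule.neg_mem _ ⟨Pi.basisFun k (Idx k H) ⟨(j, i), h⟩, lam_basis k H ⟨(j, i), h⟩⟩
  -- decompose a and b
  obtain ⟨ra, hra, haa⟩ : ∃ r ∈ Zsub k H,
      a = (∑ i, (bW k H).repr (qW k H a) i • xi k H i) + r :=
    ⟨_, decomp a, by abel⟩
  obtain ⟨rb, hrb, hbb⟩ : ∃ r ∈ Zsub k H,
      b = (∑ i, (bW k H).repr (qW k H b) i • xi k H i) + r :=
    ⟨_, decomp b, by abel⟩
  rw [haa, hbb, map_add,
    beta_Zsub_right hHc h1 hdim _ rb hrb, add_zero,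
    map_add, LinearMap.add_apply,
    beta_Zsub_left hHc h1 hdim ra hra, add_zero,
    map_sum]
  refine Submodule.sum_mem _ fun j _ => ?_
  rw [map_smul]
  refine Submodule.smul_mem _ _ ?_
  rw [map_sum, LinearMap.sum_apply]
  refine Submodule.sum_mem _ fun i _ => ?_
  rw [LinearMap.map_smul, LinearMap.smul_apply]
  exact Submodule.smul_mem _ _ (hxi i j)

variable (k H)

/-- `F² = [F,F]` as a submodule of the free Lie algebra. -/
noncomputable def Fsq : Submodule k (FreeLieAlgebra k H) :=
  LieSubmodule.toSubmodule
    (⁅(⊤ : LieIdeal k (FreeLieAlgebra k H)), (⊤ : LieIdeal k (FreeLieAlgebra k H))⁆ :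
      LieIdeal k (FreeLieAlgebra k H))

/-- Image of `F²` in `T = F/[R,F]`. -/
noncomputable def BT : Submodule k (T k H) := (Fsq k H).map (mkT k H)

variable {k H}

lemma mkT_lie_eq_beta (f g : FreeLieAlgebra k H) :
    mkT k H ⁅f, g⁆ = beta k H (piF k H f) (piF k H g) := by
  rw [beta_apply]
  rw [mkT_lie_congr_left (a := f) (b := of k (piF k H f)) (by rw [piF_of]) g]
  exact mkT_lie_congr_right _ (by rw [piF_of])

lemma mkT_lie_mem_BT (f g : FreeLieAlgebra k H) : mkT k H ⁅f, g⁆ ∈ BT k H :=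
  Submodule.mem_map_of_mem
    (LieSubmodule.lie_mem_lie (LieSubmodule.mem_top f) (LieSubmodule.mem_top g))

lemma range_lam_eq_BT (hHc : derivedIdeal k H = LieAlgebra.center k H)
    (h1 : finrank k ↥(Zsub k H) = 1) (hdim : 4 ≤ finrank k H) :
    LinearMap.range (lam k H) = BT k H := by
  apply le_antisymm
  · rw [lam, Basis.constr_range, Submodule.span_le]
    rintro t ⟨p, rfl⟩
    exact mkT_lie_mem_BT _ _
  · rw [BT, Submodule.map_le_iff_le_comap, Fsq,
      LieSubmodule.lieIdeal_oper_eq_linear_span', Submodule.span_le]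
    rintro f ⟨x, -, n, -, rfl⟩

    show mkT k H ⁅x, n⁆ ∈ LinearMap.range (lam k H)
    rw [mkT_lie_eq_beta]
    exact beta_mem_range hHc h1 hdim _ _

end SH

end Main4
section Main5

open FreeLieAlgebra Submodule

namespace SH

variable (k : Type*) [Field k] (H : Type*) [LieRing H] [LieAlgebra k H]
variable [FiniteDimensional k H]

/-- The "coordinates of the wedge" bilinear map `W × W → V`. -/
noncomputable def eps : Wq k H →ₗ[k] Wq k H →ₗ[k] Vm k H :=
  LinearMap.mk₂ k
    (fun w1 w2 => fun p => (bW k H).repr w1 p.1.1 * (bW k H).repr w2 p.1.2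
      - (bW k H).repr w1 p.1.2 * (bW k H).repr w2 p.1.1)
    (fun w w' u => by
      funext p
      simp only [map_add, Finsupp.coe_add, Pi.add_apply]
      ring)
    (fun c w u => by
      funext p
      simp only [map_smul, Finsupp.coe_smul, Pi.smul_apply, smul_eq_mul]
      ring)
    (fun w u u' => by
      funext p
      simp only [map_add, Finsupp.coe_add, Pi.add_apply]
      ring)
    (fun c w u => by
      funext p
      simp only [map_smul, Finsupp.coe_smul, Pi.smul_apply, smul_eq_mul]
      ring)

lemma eps_apply (w1 w2 : Wq k H) (p : Idx k H) :
    eps k H w1 w2 p = (bW k H).repr w1 p.1.1 * (bW k H).repr w2 p.1.2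
      - (bW k H).repr w1 p.1.2 * (bW k H).repr w2 p.1.1 := rfl

/-- The 2-cocycle on `H` with values in `V`. -/
noncomputable def sg : H →ₗ[k] H →ₗ[k] Vm k H :=
  (eps k H).compl₁₂ (qW k H) (qW k H)

lemma sg_apply (x y : H) : sg k H x y = eps k H (qW k H x) (qW k H y) := rfl

lemma sg_self (x : H) : sg k H x x = 0 := by
  funext p
  rw [sg_apply, eps_apply]
  ring_nf
  rfl

lemma qW_lie (x y : H) : qW k H ⁅x, y⁆ = 0 := by
  rw [qW, Submodule.mkQ_apply, Submodule.Quotient.mk_eq_zero]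
  exact lie_mem_Zsub x y

lemma sg_brkl (x y z : H) : sg k H ⁅x, y⁆ z = 0 := by
  rw [sg_apply, qW_lie, map_zero, LinearMap.zero_apply]

lemma sg_brkr (x y z : H) : sg k H x ⁅y, z⁆ = 0 := by
  rw [sg_apply, qW_lie, map_zero]

/-- The cocycle data for the central extension `E = H × V`. -/
noncomputable def cD : CocData k H (Vm k H) where
  σ := sg k H
  alt := sg_self k H
  brkl := sg_brkl k H
  brkr := sg_brkr k H

/-- The Lie algebra morphism `F → E = H ⊕ V`. -/
noncomputable def psi : FreeLieAlgebra k H →ₗ⁅k⁆ CExt (cD k H) :=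
  FreeLieAlgebra.lift k (fun x => (CExt.mkE (cD k H) x 0))

lemma psi_of (x : H) : psi k H (of k x) = CExt.mkE (cD k H) x 0 :=
  FreeLieAlgebra.lift_of_apply _ _

lemma fst_psi (f : FreeLieAlgebra k H) : (psi k H f).1 = piF k H f := by
  have h : (CExt.fst (cD k H)).comp (psi k H) = piF k H := by
    apply FreeLieAlgebra.hom_ext
    intro x
    show (psi k H (of k x)).1 = piF k H (of k x)
    rw [psi_of, piF_of, CExt.mkE_fst]
  exact congrArg (fun F => F f) h

lemma snd_psi_D (d : FreeLieAlgebra k H) (hd : d ∈ Dsub k H) :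
    d ∈ LinearMap.ker ((CExt.snd (cD k H)) ∘ₗ (psi k H : FreeLieAlgebra k H →ₗ[k] CExt (cD k H))) := by
  revert d
  rw [← SetLike.le_def]
  show Dsub k H ≤ _
  rw [Dsub, multDen, LieSubmodule.lieIdeal_oper_eq_linear_span', Submodule.span_le]
  rintro d ⟨r, hr, f, -, rfl⟩
  rw [SetLike.mem_coe, LinearMap.mem_ker, LinearMap.comp_apply]
  have h0 : psi k H ⁅r, f⁆ = 0 := by
    rw [LieHom.map_lie]
    apply CExt.central
    rw [fst_psi]
    exact LieHom.mem_ker.1 hr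
  rw [LieHom.coe_toLinearMap, h0, map_zero]

/-- The retraction `T → V`. -/
noncomputable def theta : T k H →ₗ[k] Vm k H :=
  Submodule.liftQ (Dsub k H)
    ((CExt.snd (cD k H)) ∘ₗ (psi k H : FreeLieAlgebra k H →ₗ[k] CExt (cD k H)))
    (fun d hd => snd_psi_D k H d hd)

lemma theta_mkT (f : FreeLieAlgebra k H) :
    theta k H (mkT k H f) = (psi k H f).2 := rfl

lemma theta_lam : (theta k H) ∘ₗ (lam k H) = LinearMap.id := by
  apply (Pi.basisFun k (Idx k H)).ext
  intro p
  rw [LinearMap.comp_apply, LinearMap.id_apply, lam_basis, beta_apply, theta_mkT,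
    LieHom.map_lie, psi_of, psi_of, CExt.snd_bracket, CExt.mkE_fst, CExt.mkE_fst]
  have hσ : (cD k H).σ = sg k H := rfl
  rw [hσ, sg_apply, qW_xi, qW_xi]
  funext p'
  rw [eps_apply, Basis.repr_self, Basis.repr_self]
  have hlt : p.1.1 < p.1.2 := p.2
  have hlt' : p'.1.1 < p'.1.2 := p'.2
  rcases eq_or_ne p' p with rfl | hne
  · rw [Finsupp.single_eq_same, Finsupp.single_eq_same,
      Finsupp.single_eq_of_ne (ne_of_lt hlt)]
    simp [Pi.basisFun_apply, Pi.single_apply, Function.update_apply]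
  · have h0 : Pi.basisFun k (Idx k H) p p' = 0 := by
      simp [Pi.basisFun_apply, Pi.single_apply, Function.update_apply, hne]
    rw [h0]
    by_cases h11 : p.1.1 = p'.1.1
    · by_cases h22 : p.1.2 = p'.1.2
      · exact absurd (Subtype.ext (Prod.ext h11 h22)).symm hne
      · have h12 : p.1.1 ≠ p'.1.2 := by rw [h11]; exact ne_of_lt hlt'
        rw [Finsupp.single_eq_of_ne' h22, Finsupp.single_eq_of_ne' h12]
        ring
    · rw [Finsupp.single_eq_of_ne' h11]
      by_cases h12 : p.1.1 = p'.1.2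
      · have h21 : p.1.2 ≠ p'.1.1 := by
          intro hc
          rw [← h12] at hlt'
          rw [← hc] at hlt'
          exact lt_asymm hlt hlt'
        rw [Finsupp.single_eq_of_ne' h21]
        ring
      · rw [Finsupp.single_eq_of_ne' h12]
        ring

end SH

end Main5
section Main6

open FreeLieAlgebra Submodule

namespace SH

variable (k : Type*) [Field k] (H : Type*) [LieRing H] [LieAlgebra k H]
variable [FiniteDimensional k H]

/-- The projection `T = F/[R,F] → H` induced by `π`. -/
noncomputable def Pmap : T k H →ₗ[k] H :=
  Submodule.liftQ (Dsub k H) (piF k H : FreeLieAlgebra k H →ₗ[k] H) (by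
    rw [Dsub, multDen, LieSubmodule.lieIdeal_oper_eq_linear_span', Submodule.span_le]
    rintro d ⟨r, hr, f, -, rfl⟩
    rw [SetLike.mem_coe, LinearMap.mem_ker, LieHom.coe_toLinearMap, LieHom.map_lie]
    have hr0 : presPi k H r = 0 := LieHom.mem_ker.1 hr
    show ⁅presPi k H r, piF k H f⁆ = 0
    rw [hr0, zero_lie])

lemma Pmap_mkT (f : FreeLieAlgebra k H) : Pmap k H (mkT k H f) = piF k H f := rfl

lemma map_P_BT : (BT k H).map (Pmap k H) = Zsub k H := by
  rw [BT, ← Submodule.map_comp]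
  have hcomp : (Pmap k H) ∘ₗ (mkT k H) = (piF k H : FreeLieAlgebra k H →ₗ[k] H) := by
    rw [Pmap, mkT]
    exact Submodule.liftQ_mkQ _ _ _
  rw [hcomp]
  apply le_antisymm
  · rw [Fsq, LieSubmodule.lieIdeal_oper_eq_linear_span', Submodule.map_span,
      Submodule.span_le]
    rintro u ⟨f, ⟨x, -, n, -, rfl⟩, rfl⟩
    rw [SetLike.mem_coe, LieHom.coe_toLinearMap, LieHom.map_lie]
    exact lie_mem_Zsub _ _
  · rw [Zsub, derivedIdeal, LieSubmodule.lieIdeal_oper_eq_linear_span', Submodule.span_le]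
    rintro u ⟨x, -, n, -, rfl⟩
    refine ⟨⁅of k x, of k n⁆, ?_, ?_⟩
    · exact LieSubmodule.lie_mem_lie (LieSubmodule.mem_top _) (LieSubmodule.mem_top _)
    · rw [LieHom.coe_toLinearMap, LieHom.map_lie, piF_of, piF_of]

/-- Image of `R ∩ F²` in `T`. -/
noncomputable def Asub : Submodule k (T k H) :=
  (LieSubmodule.toSubmodule (multNum k H)).map (mkT k H)

lemma Asub_eq : Asub k H = BT k H ⊓ LinearMap.ker (Pmap k H) := by
  apply le_antisymm
  · rintro t ⟨f, hf, rfl⟩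
    have hf' : f ∈ multNum k H := hf
    rw [multNum, LieSubmodule.mem_inf] at hf'
    obtain ⟨hk, hsq⟩ := hf'
    refine Submodule.mem_inf.2 ⟨Submodule.mem_map_of_mem hsq, ?_⟩
    rw [LinearMap.mem_ker, Pmap_mkT]
    exact LieHom.mem_ker.1 hk
  · rintro t ⟨htB, htP⟩
    obtain ⟨f, hfsq, rfl⟩ := htB
    rw [SetLike.mem_coe, LinearMap.mem_ker, Pmap_mkT] at htP
    refine ⟨f, ?_, rfl⟩
    show f ∈ multNum k H
    rw [multNum, LieSubmodule.mem_inf]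
    exact ⟨LieHom.mem_ker.2 htP, hfsq⟩

lemma lam_injective : Function.Injective (lam k H) := by
  have h : ∀ v, theta k H (lam k H v) = v := fun v => by
    rw [← LinearMap.comp_apply, theta_lam, LinearMap.id_apply]
  exact Function.LeftInverse.injective h

lemma finrank_Vm : finrank k (Vm k H) = Fintype.card (Idx k H) := Module.finrank_pi k

/-- `Fin n × Fin n` strictly increasing pairs counted. -/
lemma card_Idx_mul_two : Fintype.card (Idx k H) * 2 = nW k H * (nW k H - 1) := by
  classical
  have e : Idx k H ≃ (Σ j : Fin (nW k H), Fin j.val) :=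
    { toFun := fun p => ⟨p.1.2, ⟨p.1.1, p.2⟩⟩
      invFun := fun s => ⟨(⟨s.2.1, s.2.2.trans s.1.2⟩, s.1), s.2.2⟩
      left_inv := fun p => rfl
      right_inv := fun s => rfl }
  rw [Fintype.card_congr e, Fintype.card_sigma]
  simp only [Fintype.card_fin]
  rw [Fin.sum_univ_eq_sum_range (fun i => i)]
  exact Finset.sum_range_id_mul_two _

lemma finrank_BT (hHc : derivedIdeal k H = LieAlgebra.center k H)
    (h1 : finrank k ↥(Zsub k H) = 1) (hdim : 4 ≤ finrank k H) :
    finrank k ↥(BT k H) = Fintype.card (Idx k H) := by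
  rw [← range_lam_eq_BT hHc h1 hdim]
  rw [← finrank_Vm k H]
  exact (LinearEquiv.ofInjective (lam k H) (lam_injective k H)).finrank_eq.symm

lemma fd_BT (hHc : derivedIdeal k H = LieAlgebra.center k H)
    (h1 : finrank k ↥(Zsub k H) = 1) (hdim : 4 ≤ finrank k H) :
    FiniteDimensional k ↥(BT k H) := by
  rw [← range_lam_eq_BT hHc h1 hdim]
  infer_instance

lemma finrank_Asub (hHc : derivedIdeal k H = LieAlgebra.center k H)
    (h1 : finrank k ↥(Zsub k H) = 1) (hdim : 4 ≤ finrank k H) :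
    finrank k ↥(Asub k H) + 1 = Fintype.card (Idx k H) := by
  haveI := fd_BT k H hHc h1 hdim
  set g := (Pmap k H) ∘ₗ (BT k H).subtype with hg
  have hrn := LinearMap.finrank_range_add_finrank_ker g
  have hrange_g : LinearMap.range g = Zsub k H := by
    rw [hg, LinearMap.range_comp, Submodule.range_subtype]
    exact map_P_BT k H
  have hker_g : LinearMap.ker g
      = Submodule.comap (BT k H).subtype (BT k H ⊓ LinearMap.ker (Pmap k H)) := by
    ext ⟨x, hx⟩
    simp only [LinearMap.mem_ker, Submodule.mem_comap, Submodule.mem_inf, hg,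
      LinearMap.comp_apply, Submodule.coe_subtype]
    exact ⟨fun h => ⟨hx, h⟩, fun h => h.2⟩
  have hA : finrank k ↥(Asub k H) = finrank k ↥(LinearMap.ker g) := by
    rw [Asub_eq, hker_g]
    exact (Submodule.comapSubtypeEquivOfLe inf_le_left).finrank_eq.symm
  rw [hA, ← finrank_BT k H hHc h1 hdim, ← hrn, hrange_g, h1, Nat.add_comm]

end SH

end Main6
section Main7

open FreeLieAlgebra Submodule

namespace SH

variable (k : Type*) [Field k] (H : Type*) [LieRing H] [LieAlgebra k H]
variable [FiniteDimensional k H]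

noncomputable def phi : ↥(multNum k H) →ₗ[k] T k H :=
  (mkT k H) ∘ₗ
    (((multNum k H : LieSubalgebra k (FreeLieAlgebra k H))).incl :
      _ →ₗ⁅k⁆ FreeLieAlgebra k H).toLinearMap

lemma hker_phi :
    LieSubmodule.toSubmodule
      (LieIdeal.comap ((multNum k H : LieSubalgebra k (FreeLieAlgebra k H))).incl (multDen k H))
      = LinearMap.ker (phi k H) := by
  rw [phi]
  erw [LinearMap.ker_comp, mkT, Submodule.ker_mkQ, LieIdeal.comap_toSubmodule]
  rfl

lemma hrange_phi : LinearMap.range (phi k H) = Asub k H := by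
  rw [phi]
  erw [LinearMap.range_comp, Asub]
  congr 1
  ext y
  constructor
  · rintro ⟨x, rfl⟩
    exact x.2
  · intro hy
    exact ⟨⟨y, hy⟩, rfl⟩

lemma finrank_schur_eq : finrank k (schurMultiplier k H) = finrank k ↥(Asub k H) := by
  have e0 : (↥(multNum k H) ⧸
        (LieSubmodule.toSubmodule (LieIdeal.comap
          ((multNum k H : LieSubalgebra k (FreeLieAlgebra k H))).incl (multDen k H))))
      ≃ₗ[k] (↥(multNum k H) ⧸ LinearMap.ker (phi k H)) :=
    Submodule.quotEquivOfEq _ _ (hker_phi k H)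
  have e1 : schurMultiplier k H ≃ₗ[k] ↥(Asub k H) :=
    LinearEquiv.trans (LinearEquiv.trans e0 (LinearMap.quotKerEquivRange (phi k H)))
      (LinearEquiv.ofEq _ _ (hrange_phi k H))
  exact e1.finrank_eq

end SH

end Main7

theorem stmt4 (k : Type*) [Field k] (H : Type*) [LieRing H] [LieAlgebra k H]
    [FiniteDimensional k H] (m : ℕ) (hm : 2 ≤ m) (hHdim : finrank k H = 2 * m + 1)
    (hHc : derivedIdeal k H = LieAlgebra.center k H)
    (hH1 : finrank k ↥(derivedIdeal k H) = 1) :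
    schurMultDim k H = 2 * m ^ 2 - m - 1 := by
  have h1 : finrank k ↥(SH.Zsub k H) = 1 := hH1
  have hdim : 4 ≤ finrank k H := by omega
  have hnW : SH.nW k H + 1 = finrank k H := by
    have h := Submodule.finrank_quotient_add_finrank (SH.Zsub k H)
    rw [h1] at h
    exact h
  have hfr := SH.finrank_Asub k H hHc h1 hdim
  have hsch : finrank k (schurMultiplier k H) = finrank k ↥(SH.Asub k H) :=
    SH.finrank_schur_eq k H
  have hcard2 := SH.card_Idx_mul_two k H
  have hnW2 : SH.nW k H = 2 * m := by omega
  rw [hnW2] at hcard2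
  rw [schurMultDim, hsch]
  obtain ⟨m', rfl⟩ : ∃ m', m = m' + 2 := ⟨m - 2, by omega⟩
  have hc1 : 2 * (m' + 2) - 1 = 2 * m' + 3 := by omega
  rw [hc1] at hcard2
  have hc2 : 2 * (m' + 2) * (2 * m' + 3) = 2 * ((m' * m') * 2 + 7 * m' + 6) := by ring
  rw [hc2] at hcard2
  have hgoal : 2 * (m' + 2) ^ 2 = (m' * m') * 2 + 8 * m' + 8 := by ring
  rw [hgoal]
  generalize m' * m' = s at hcard2 ⊢
  omega
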